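/- arXiv:1707.01554 — 2 statements merged into one kernel-verified Lean document; each statement's English description precedes it below -/
import Mathlib

section
/- Let F ⊆ ℝⁿ be a connected closed set and f: ℝⁿ → ℝ a continuous concave function. Let x* ∈ F be a local maximizer of f over F, and suppose f(x) ≤ f(x*) for all x in the boundary ∂F of F. Then f(x) ≤ f(x*) for all x ∈ F; that is, x* is a global maximizer of f over F. -/
theorem local_max_boundary_max_implies_global_max
    {n : ℕ} (F : Set (EuclideanSpace ℝ (Fin n)))
    (hFconn : IsConnected F) (hFclosed : IsClosed F)
    (f : EuclideanSpace ℝ (Fin n) → ℝ)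
    (hfc : Continuous f) (hconc : ConcaveOn ℝ Set.univ f)
    (xs : EuclideanSpace ℝ (Fin n)) (hxs : xs ∈ F)
    (hloc : ∃ N ∈ nhds xs, ∀ x ∈ N ∩ F, f x ≤ f xs)
    (hbnd : ∀ x ∈ frontier F, f x ≤ f xs) :
    ∀ x ∈ F, f x ≤ f xs := by
  by_contra h
  push_neg at h
  obtain ⟨xb, hxbF, hxb⟩ := h
  set c := f xs with hc
  set γ : ℝ → EuclideanSpace ℝ (Fin n) := fun t => (1 - t) • xs + t • xb with hγdef
  have hγc : Continuous γ := by
    apply Continuous.add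
    · exact (continuous_const.sub continuous_id).smul continuous_const
    · exact continuous_id.smul continuous_const
  have hγ0 : γ 0 = xs := by simp [hγdef]
  have hγ1 : γ 1 = xb := by simp [hγdef]
  have key : ∀ t ∈ Set.Ioc (0:ℝ) 1, c < f (γ t) := by
    intro t ht
    have h1 := hconc.2 (Set.mem_univ xs) (Set.mem_univ xb)
      (by linarith [ht.2] : (0:ℝ) ≤ 1 - t) (le_of_lt ht.1) (by ring)
    have h2 : (1 - t) * c + t * f xb ≤ f (γ t) := by
      simpa [hγdef, smul_eq_mul] using h1
    nlinarith [ht.1, hxb]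
  have hfrontier : ∀ t ∈ Set.Ioc (0:ℝ) 1, γ t ∉ frontier F := by
    intro t ht hf
    exact absurd (hbnd _ hf) (not_le.mpr (key t ht))
  have hfr_eq : frontier F = F \ interior F := hFclosed.frontier_eq
  have hsub : γ '' Set.Ioc 0 1 ⊆ interior F ∪ Fᶜ := by
    rintro y ⟨t, ht, rfl⟩
    by_cases hF : γ t ∈ F
    · left
      by_contra hint
      exact hfrontier t ht (hfr_eq ▸ ⟨hF, hint⟩)
    · exact Or.inr hF
  have hxbint : xb ∈ interior F := by
    by_contra hint
    exact hfrontier 1 ⟨one_pos, le_refl 1⟩ (hγ1 ▸ hfr_eq ▸ ⟨hxbF, hγ1.symm ▸ hint⟩)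
  have hconn : IsPreconnected (γ '' Set.Ioc 0 1) :=
    isPreconnected_Ioc.image γ hγc.continuousOn
  have himg_sub : γ '' Set.Ioc 0 1 ⊆ interior F := by
    apply hconn.subset_left_of_subset_union isOpen_interior hFclosed.isOpen_compl
    · exact Set.disjoint_left.mpr fun x hx hc => hc (interior_subset hx)
    · exact hsub
    · exact ⟨xb, ⟨1, ⟨one_pos, le_refl 1⟩, hγ1⟩, hxbint⟩
  obtain ⟨N, hN, hNmax⟩ := hloc
  have hpre : γ ⁻¹' N ∈ nhds (0:ℝ) := by
    apply hγc.continuousAt.preimage_mem_nhds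
    rwa [hγ0]
  have h0cl : (0:ℝ) ∈ closure (Set.Ioc (0:ℝ) 1) := by
    rw [closure_Ioc one_ne_zero.symm]
    exact ⟨le_refl 0, zero_le_one⟩
  obtain ⟨t, htN, htIoc⟩ := mem_closure_iff_nhds.mp h0cl _ hpre
  have htF : γ t ∈ F := interior_subset (himg_sub ⟨t, htIoc, rfl⟩)
  exact absurd (hNmax _ ⟨htN, htF⟩) (not_le.mpr (key t htIoc))
end

section
/- Let w, θᵘ, vˡ be positive reals with θᵘ ≤ π/6, vˡ ≥ 0.95, and w ≤ 1.1025. If (w^R, w^I) ∈ ℝ² satisfies 0 ≤ w^I ≤ w^R·tan(θᵘ) and (w^R)² + (w^I)² ≥ (vˡ)²·w, then w^R ≥ 0.77·w. -/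
theorem opf_minimal_feasible_wR
    (w θu vl wR wI : ℝ)
    (hw : 0 < w) (hθu : 0 < θu) (hvl : 0 < vl)
    (hθu' : θu ≤ Real.pi / 6) (hvl' : 0.95 ≤ vl) (hw' : w ≤ 1.1025)
    (hwI0 : 0 ≤ wI) (hwI : wI ≤ wR * Real.tan θu)
    (hcirc : vl ^ 2 * w ≤ wR ^ 2 + wI ^ 2) :
    0.77 * w ≤ wR := by
  have hπ6 : Real.pi / 6 < Real.pi / 2 := by
    have := Real.pi_pos; linarith
  have htanpos : 0 < Real.tan θu :=
    Real.tan_pos_of_pos_of_lt_pi_div_two hθu (lt_of_le_of_lt hθu' hπ6)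
  have htan : Real.tan θu ≤ 1 / Real.sqrt 3 := by
    rw [← Real.tan_pi_div_six]
    rcases eq_or_lt_of_le hθu' with h | h
    · rw [h]
    · exact le_of_lt (Real.tan_lt_tan_of_nonneg_of_lt_pi_div_two hθu.le hπ6 h)
  have h3 : Real.sqrt 3 ^ 2 = 3 := Real.sq_sqrt (by norm_num)
  have hs3 : 0 < Real.sqrt 3 := Real.sqrt_pos.mpr (by norm_num)
  have htan2 : Real.tan θu ^ 2 ≤ 1 / 3 := by
    have := mul_le_mul htan htan htanpos.le (by positivity)
    rw [div_mul_div_comm, one_mul, Real.mul_self_sqrt (by norm_num : (0:ℝ) ≤ 3)] at this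
    nlinarith
  have hwR0 : 0 ≤ wR := by
    by_contra h
    push_neg at h
    nlinarith
  have hwI2 : wI ^ 2 ≤ wR ^ 2 * (1 / 3) := by
    nlinarith
  nlinarith [sq_nonneg (wR - 0.77 * w), sq_nonneg vl, mul_le_mul hvl' hvl' (by norm_num) hvl.le, mul_pos hw hw]
end
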